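/- Key link formula: let G be symmetric with I - δG invertible, let i ≠ j, and E_{ij} as above. If the quantity D := (1 - δ m_{ij}(G))² - δ² m_{ii}(G) m_{jj}(G) is nonzero and I - δ(G + E_{ij}) is invertible, then 1ᵀ(I - δ(G+E_{ij}))^{-1}1 - 1ᵀ(I - δG)^{-1}1 = δ·[δ m_{ii} b_j² + δ m_{jj} b_i² + 2(1 - δ m_{ij}) b_i b_j]/D, where m_{ab} = m_{ab}(G) are entries of (I - δG)^{-1} and b_a are entries of (I - δG)^{-1}1. -/

import Mathlib

open Matrix

theorem key_link_formula {n : ℕ} (G : Matrix (Fin n) (Fin n) ℝ) (δ : ℝ)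
    (i j : Fin n) (hij : i ≠ j) (hsym : G.IsSymm)
    (h1 : IsUnit (1 - δ • G))
    (h2 : IsUnit (1 - δ • (G + (Matrix.single i j (1 : ℝ) +
      Matrix.single j i (1 : ℝ)))))
    (hD : (1 - δ * ((1 - δ • G)⁻¹ i j)) ^ 2
        - δ ^ 2 * ((1 - δ • G)⁻¹ i i) * ((1 - δ • G)⁻¹ j j) ≠ 0) :
    ((∑ a, ((1 - δ • (G + (Matrix.single i j (1 : ℝ) +
          Matrix.single j i (1 : ℝ))))⁻¹ *ᵥ fun _ => (1 : ℝ)) a)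
        - ∑ a, ((1 - δ • G)⁻¹ *ᵥ fun _ => (1 : ℝ)) a)
      = δ * (δ * ((1 - δ • G)⁻¹ i i) * (((1 - δ • G)⁻¹ *ᵥ fun _ => (1 : ℝ)) j) ^ 2
            + δ * ((1 - δ • G)⁻¹ j j) * (((1 - δ • G)⁻¹ *ᵥ fun _ => (1 : ℝ)) i) ^ 2
            + 2 * (1 - δ * ((1 - δ • G)⁻¹ i j))
                * (((1 - δ • G)⁻¹ *ᵥ fun _ => (1 : ℝ)) i)
                * (((1 - δ • G)⁻¹ *ᵥ fun _ => (1 : ℝ)) j))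
          / ((1 - δ * ((1 - δ • G)⁻¹ i j)) ^ 2
              - δ ^ 2 * ((1 - δ • G)⁻¹ i i) * ((1 - δ • G)⁻¹ j j)) := by
  set E := Matrix.single i j (1 : ℝ) + Matrix.single j i (1 : ℝ) with hE
  set A := 1 - δ • G with hA
  set B := 1 - δ • (G + E) with hB
  have hAd : IsUnit A.det := (Matrix.isUnit_iff_isUnit_det A).mp h1
  have hBd : IsUnit B.det := (Matrix.isUnit_iff_isUnit_det B).mp h2
  have hAA : A * A⁻¹ = 1 := Matrix.mul_nonsing_inv A hAd
  have hAA' : A⁻¹ * A = 1 := Matrix.nonsing_inv_mul A hAd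
  have hBB : B * B⁻¹ = 1 := Matrix.mul_nonsing_inv B hBd
  have hBB' : B⁻¹ * B = 1 := Matrix.nonsing_inv_mul B hBd
  have hEsym : Eᵀ = E := by
    ext a b
    simp only [hE, transpose_apply, Matrix.add_apply, Matrix.single, of_apply, and_comm]
    ring
  have hAsym : Aᵀ = A := by
    rw [hA]; simp [transpose_sub, transpose_smul, hsym.eq]
  have hBsym : Bᵀ = B := by
    rw [hB]; simp [transpose_sub, transpose_smul, transpose_add, hsym.eq, hEsym]
  have hAiT : (A⁻¹)ᵀ = A⁻¹ := by rw [Matrix.transpose_nonsing_inv, hAsym]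
  have hBiT : (B⁻¹)ᵀ = B⁻¹ := by rw [Matrix.transpose_nonsing_inv, hBsym]
  have hAisym : ∀ a k, A⁻¹ k a = A⁻¹ a k := fun a k => by
    have h := congrFun (congrFun hAiT k) a
    rw [transpose_apply] at h
    exact h.symm
  have hBisym : ∀ a k, B⁻¹ k a = B⁻¹ a k := fun a k => by
    have h := congrFun (congrFun hBiT k) a
    rw [transpose_apply] at h
    exact h.symm
  set b := (A⁻¹ *ᵥ fun _ => (1 : ℝ)) with hb
  set c := (B⁻¹ *ᵥ fun _ => (1 : ℝ)) with hc
  -- E action on a vector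
  have hEv : ∀ (v : Fin n → ℝ) (a : Fin n),
      (E *ᵥ v) a = (if a = i then v j else 0) + (if a = j then v i else 0) := by
    intro v a
    simp [hE, mulVec, dotProduct, Matrix.single, add_mul, Finset.sum_add_distrib, ite_and,
      eq_comm]
  have hMEv : ∀ (M : Matrix (Fin n) (Fin n) ℝ) (v : Fin n → ℝ) (a : Fin n),
      (M *ᵥ (E *ᵥ v)) a = M a i * v j + M a j * v i := by
    intro M v a
    simp only [mulVec, dotProduct]
    calc (∑ k, M a k * (E *ᵥ v) k)
        = ∑ k, M a k * ((if k = i then v j else 0) + (if k = j then v i else 0)) := by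
          refine Finset.sum_congr rfl fun k _ => by rw [hEv]
      _ = M a i * v j + M a j * v i := by
          simp [mul_add, Finset.sum_add_distrib, mul_ite]
  -- A - B = δ • E
  have hAB : A = B + δ • E := by
    rw [hA, hB, smul_add]; abel
  -- c-equation: c = b + δ • (A⁻¹ *ᵥ (E *ᵥ c))
  have hAc : A *ᵥ c = (fun _ => (1 : ℝ)) + δ • (E *ᵥ c) := by
    rw [hAB, add_mulVec, smul_mulVec, hc, mulVec_mulVec, hBB, one_mulVec]
  have hceq : c = b + δ • (A⁻¹ *ᵥ (E *ᵥ c)) := by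
    have : A⁻¹ *ᵥ (A *ᵥ c) = c := by rw [mulVec_mulVec, hAA', one_mulVec]
    conv_lhs => rw [← this]
    rw [hAc, mulVec_add, mulVec_smul, ← hb]
  -- b-equation: b = c - δ • (B⁻¹ *ᵥ (E *ᵥ b))
  have hBb : B *ᵥ b = (fun _ => (1 : ℝ)) - δ • (E *ᵥ b) := by
    have : B = A - δ • E := by rw [hAB]; abel
    rw [this, sub_mulVec, smul_mulVec, hb, mulVec_mulVec, hAA, one_mulVec]
  have hbeq : b = c - δ • (B⁻¹ *ᵥ (E *ᵥ b)) := by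
    have : B⁻¹ *ᵥ (B *ᵥ b) = b := by rw [mulVec_mulVec, hBB', one_mulVec]
    conv_lhs => rw [← this]
    rw [hBb, mulVec_sub, mulVec_smul, ← hc]
  -- column sums of B⁻¹
  have colB : ∀ a, (∑ k, B⁻¹ k a) = c a := by
    intro a
    rw [hc]
    simp only [mulVec, dotProduct, mul_one]
    exact Finset.sum_congr rfl fun k _ => hBisym a k
  -- sum difference
  have hdiff : (∑ a, c a) - (∑ a, b a) = δ * (c i * b j + c j * b i) := by
    have h1 : ∀ a, c a - b a = δ * (B⁻¹ a i * b j + B⁻¹ a j * b i) := by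
      intro a
      have := congrFun hbeq a
      simp only [Pi.sub_apply, Pi.smul_apply, smul_eq_mul] at this
      rw [hMEv] at this
      linarith
    calc (∑ a, c a) - (∑ a, b a) = ∑ a, (c a - b a) := by rw [Finset.sum_sub_distrib]
      _ = ∑ a, δ * (B⁻¹ a i * b j + B⁻¹ a j * b i) := Finset.sum_congr rfl fun a _ => h1 a
      _ = δ * ((∑ a, B⁻¹ a i) * b j + (∑ a, B⁻¹ a j) * b i) := by
          rw [← Finset.mul_sum, Finset.sum_add_distrib, ← Finset.sum_mul, ← Finset.sum_mul]
      _ = δ * (c i * b j + c j * b i) := by rw [colB i, colB j]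
  -- component equations
  have e1 : c i = b i + δ * (A⁻¹ i i * c j + A⁻¹ i j * c i) := by
    have := congrFun hceq i
    simp only [Pi.add_apply, Pi.smul_apply, smul_eq_mul] at this
    rw [hMEv] at this; exact this
  have e2 : c j = b j + δ * (A⁻¹ i j * c j + A⁻¹ j j * c i) := by
    have := congrFun hceq j
    simp only [Pi.add_apply, Pi.smul_apply, smul_eq_mul] at this
    rw [hMEv, hAisym i j] at this; exact this
  rw [hdiff, eq_div_iff hD]
  linear_combination (δ * (b j * (1 - δ * A⁻¹ i j) + b i * δ * A⁻¹ j j)) * e1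
    + (δ * (b j * δ * A⁻¹ i i + b i * (1 - δ * A⁻¹ i j))) * e2
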